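/- The category FPCM of trace monoids and basic homomorphisms is complete, i.e., has all small limits. -/

import Mathlib

open CategoryTheory

/-- The elementary commutation relation on words generated by an independence relation. -/
def traceRel (E : Type) (I : Set (E × E)) : FreeMonoid E → FreeMonoid E → Prop :=
  fun x y => ∃ a b : E, (a, b) ∈ I ∧ x = FreeMonoid.of a * FreeMonoid.of b ∧
    y = FreeMonoid.of b * FreeMonoid.of a

/-- The congruence on the free monoid generated by commutation of independent pairs. -/
def traceCon (E : Type) (I : Set (E × E)) : Con (FreeMonoid E) := conGen (traceRel E I)

/-- The trace monoid `M(E,I)`. -/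
abbrev TraceMonoid (E : Type) (I : Set (E × E)) : Type := (traceCon E I).Quotient

/-- The canonical projection from words to traces. -/
def trcMk {E : Type} {I : Set (E × E)} : FreeMonoid E →* TraceMonoid E I :=
  (traceCon E I).mk'

/-- The generator of the trace monoid corresponding to an event `e`. -/
def trc {E : Type} {I : Set (E × E)} (e : E) : TraceMonoid E I :=
  trcMk (FreeMonoid.of e)

/-- `I` is an independence relation: irreflexive and symmetric. -/
structure IsIndep {E : Type} (I : Set (E × E)) : Prop where
  irrefl : ∀ a : E, (a, a) ∉ I
  symm : ∀ a b : E, (a, b) ∈ I → (b, a) ∈ I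

/-- A homomorphism of trace monoids is basic if it sends generators to generators or to `1`. -/
def IsBasic {E E' : Type} {I : Set (E × E)} {I' : Set (E' × E')}
    (f : TraceMonoid E I →* TraceMonoid E' I') : Prop :=
  ∀ e : E, (∃ e' : E', f (trc e) = trc e') ∨ f (trc e) = 1

/-- A basic homomorphism preserves independence. -/
def IsIndepPres {E E' : Type} {I : Set (E × E)} {I' : Set (E' × E')}
    (f : TraceMonoid E I →* TraceMonoid E' I') : Prop :=
  ∀ a b : E, (a, b) ∈ I → f (trc a) ≠ f (trc b) ∨ (f (trc a) = 1 ∧ f (trc b) = 1)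

/-- The monoid homomorphism out of a trace monoid induced by a map on generators whose
images commute at independent pairs. -/
def liftHom {E : Type} {I : Set (E × E)} {N : Type*} [Monoid N] (φ : E → N)
    (hφ : ∀ a b : E, (a, b) ∈ I → φ a * φ b = φ b * φ a) : TraceMonoid E I →* N :=
  (traceCon E I).lift (FreeMonoid.lift φ) (by
    apply Con.conGen_le.2
    rintro x y ⟨a, b, hab, rfl, rfl⟩
    rw [Con.ker_rel]
    simp only [map_mul, FreeMonoid.lift_eval_of]
    exact hφ a b hab)

@[simp] theorem liftHom_trc {E : Type} {I : Set (E × E)} {N : Type*} [Monoid N] (φ : E → N)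
    (hφ : ∀ a b : E, (a, b) ∈ I → φ a * φ b = φ b * φ a) (e : E) :
    liftHom φ hφ (trc (I := I) e) = φ e := by
  show (traceCon E I).lift _ _ ((traceCon E I).mk' (FreeMonoid.of e)) = φ e
  exact (Con.lift_mk' _ _).trans (by simp)

theorem trc_comm {E : Type} {I : Set (E × E)} {a b : E} (h : (a, b) ∈ I) :
    (trc a : TraceMonoid E I) * trc b = trc b * trc a := by
  show trcMk (FreeMonoid.of a) * trcMk (FreeMonoid.of b) =
    trcMk (FreeMonoid.of b) * trcMk (FreeMonoid.of a)
  rw [← map_mul, ← map_mul]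
  exact (Con.eq _).2 (ConGen.Rel.of _ _ ⟨a, b, h, rfl, rfl⟩)

theorem isBasic_id {E : Type} {I : Set (E × E)} :
    IsBasic (MonoidHom.id (TraceMonoid E I)) := fun e => Or.inl ⟨e, rfl⟩

theorem isBasic_comp {E₁ E₂ E₃ : Type} {I₁ : Set (E₁ × E₁)} {I₂ : Set (E₂ × E₂)}
    {I₃ : Set (E₃ × E₃)} {f : TraceMonoid E₁ I₁ →* TraceMonoid E₂ I₂}
    {g : TraceMonoid E₂ I₂ →* TraceMonoid E₃ I₃} (hf : IsBasic f) (hg : IsBasic g) :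
    IsBasic (g.comp f) := by
  intro e
  rcases hf e with ⟨e', he⟩ | he
  · rcases hg e' with ⟨e'', he''⟩ | he''
    · exact Or.inl ⟨e'', by simp [MonoidHom.comp_apply, he, he'']⟩
    · exact Or.inr (by simp [MonoidHom.comp_apply, he, he''])
  · exact Or.inr (by simp [MonoidHom.comp_apply, he])
/-- An object of the category `FPCM`: a set of events with an independence relation. -/
structure FPCMObj where
  E : Type
  I : Set (E × E)
  indep : IsIndep I

/-- The category `FPCM` of trace monoids and basic homomorphisms. -/
instance : Category FPCMObj where
  Hom X Y := {f : TraceMonoid X.E X.I →* TraceMonoid Y.E Y.I // IsBasic f}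
  id _ := ⟨MonoidHom.id _, isBasic_id⟩
  comp f g := ⟨g.1.comp f.1, isBasic_comp f.2 g.2⟩
  id_comp _ := Subtype.ext (MonoidHom.comp_id _)
  comp_id _ := Subtype.ext (MonoidHom.id_comp _)
  assoc _ _ _ := Subtype.ext rfl

/-! ### Auxiliary lemmas -/

section Aux

variable {E : Type} {I : Set (E × E)}

/-- The multiset-of-letters invariant. -/
noncomputable def msHom : TraceMonoid E I →* Multiplicative (Multiset E) :=
  liftHom (fun e => Multiplicative.ofAdd {e}) (fun _ _ _ => mul_comm _ _)

theorem trc_injective : Function.Injective (trc (E := E) (I := I)) := by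
  intro a b h
  have h2 := congrArg (msHom (I := I)) h
  simp only [msHom, liftHom_trc] at h2
  have : ({a} : Multiset E) = {b} := h2
  simpa using this

theorem trc_ne_one (a : E) : (trc a : TraceMonoid E I) ≠ 1 := by
  intro h
  have h2 := congrArg (msHom (I := I)) h
  simp only [msHom, liftHom_trc, map_one] at h2
  have : ({a} : Multiset E) = 0 := h2
  simp at this

theorem trace_hom_ext {N : Type*} [Monoid N] {f g : TraceMonoid E I →* N}
    (h : ∀ e, f (trc e) = g (trc e)) : f = g := by
  refine MonoidHom.ext fun x => ?_
  obtain ⟨w, rfl⟩ := Con.mk'_surjective x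
  induction w using FreeMonoid.recOn with
  | one =>
    show f (trcMk 1) = g (trcMk 1)
    simp
  | of_mul a w ihw =>
    show f (trcMk (FreeMonoid.of a * w)) = g (trcMk (FreeMonoid.of a * w))
    simp only [map_mul]
    exact congrArg₂ (· * ·) (h a) ihw

/-- Evaluate an optional generator in the trace monoid. -/
def evalOpt : Option E → TraceMonoid E I
  | some a => trc a
  | none => 1

theorem evalOpt_injective : Function.Injective (evalOpt (E := E) (I := I)) := by
  rintro (_ | a) (_ | b) h
  · rfl
  · exact absurd h.symm (trc_ne_one b)
  · exact absurd h (trc_ne_one a)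
  · exact congrArg some (trc_injective h)

open scoped Classical in
/-- Classically extract the generator underlying a trace (if any). -/
noncomputable def extract (x : TraceMonoid E I) : Option E :=
  if h : ∃ e, x = trc e then some h.choose else none

open scoped Classical in
theorem evalOpt_extract {x : TraceMonoid E I} (hx : (∃ e, x = trc e) ∨ x = 1) :
    evalOpt (extract x) = x := by
  unfold extract
  rcases hx with ⟨e, he⟩ | h1
  · rw [dif_pos ⟨e, he⟩]
    exact (Exists.choose_spec (⟨e, he⟩ : ∃ e, x = trc e)).symm
  · rw [dif_neg, h1]
    · rfl
    · rintro ⟨e, he⟩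
      exact trc_ne_one e (h1 ▸ he).symm

end Aux

/-! ### Construction of limits in FPCM -/

namespace FPCMLimits

open CategoryTheory.Limits

variable {J : Type} [Category.{0} J] (F : J ⥤ FPCMObj)

open scoped Classical

/-- The generators of the limit trace monoid: compatible, not-everywhere-trivial tuples. -/
abbrev limE : Type :=
  { t : ∀ j : J, Option ((F.obj j).E) //
    (∃ j, (t j).isSome) ∧
    ∀ {j j' : J} (u : j ⟶ j'), (F.map u).1 (evalOpt (t j)) = evalOpt (t j') }

/-- The independence relation on the limit generators. -/
abbrev limI : Set (limE F × limE F) :=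
  { p | p.1 ≠ p.2 ∧ ∀ j, evalOpt (I := (F.obj j).I) (p.1.1 j) * evalOpt (p.2.1 j) =
      evalOpt (I := (F.obj j).I) (p.2.1 j) * evalOpt (p.1.1 j) }

theorem limI_indep : IsIndep (limI F) where
  irrefl := fun t ht => ht.1 rfl
  symm := fun _ _ h => ⟨h.1.symm, fun j => (h.2 j).symm⟩

/-- The limit object. -/
abbrev limObj : FPCMObj := ⟨limE F, limI F, limI_indep F⟩

/-- The projection homomorphisms. -/
def projHom (j : J) : TraceMonoid (limObj F).E (limObj F).I →* TraceMonoid (F.obj j).E (F.obj j).I :=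
  liftHom (fun t => evalOpt (t.1 j)) (fun _ _ hab => hab.2 j)

theorem projHom_basic (j : J) : IsBasic (projHom F j) := by
  intro t
  rcases ht : t.1 j with _ | a
  · exact Or.inr (by rw [projHom, liftHom_trc, ht]; rfl)
  · exact Or.inl ⟨a, by rw [projHom, liftHom_trc, ht]; rfl⟩

/-- The projection morphisms in FPCM. -/
def proj (j : J) : limObj F ⟶ F.obj j := ⟨projHom F j, projHom_basic F j⟩

/-- The limit cone. -/
def limCone : Cone F where
  pt := limObj F
  π :=
    { app := proj F
      naturality := by
        intro j j' u
        apply Subtype.ext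
        show (projHom F j').comp (MonoidHom.id _) = (F.map u).1.comp (projHom F j)
        rw [MonoidHom.comp_id]
        apply trace_hom_ext
        intro t
        show projHom F j' (trc t) = (F.map u).1 (projHom F j (trc t))
        rw [projHom, projHom, liftHom_trc, liftHom_trc]
        exact (t.2.2 u).symm }

section Lift

variable (c : Cone F)

/-- The tuple of components of the image of a generator under the cone legs. -/
noncomputable def liftTuple (d : c.pt.E) : ∀ j : J, Option ((F.obj j).E) :=
  fun j => extract ((c.π.app j).1 (trc d))

theorem liftTuple_eval (d : c.pt.E) (j : J) :
    evalOpt (liftTuple F c d j) = (c.π.app j).1 (trc d) :=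
  evalOpt_extract ((c.π.app j).2 d)

theorem liftTuple_compat (d : c.pt.E) {j j' : J} (u : j ⟶ j') :
    (F.map u).1 (evalOpt (liftTuple F c d j)) = evalOpt (liftTuple F c d j') := by
  rw [liftTuple_eval, liftTuple_eval]
  have := c.w u
  have h2 := congrArg (fun h : c.pt ⟶ F.obj j' => h.1 (trc d)) this
  exact h2

/-- The image of a generator under the mediating morphism. -/
noncomputable def liftGen (d : c.pt.E) : TraceMonoid (limObj F).E (limObj F).I :=
  if h : ∃ j, (liftTuple F c d j).isSome then
    trc ⟨liftTuple F c d, h, fun {_ _} u => liftTuple_compat F c _ u⟩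
  else 1

theorem liftGen_comm (a b : c.pt.E) (hab : (a, b) ∈ c.pt.I) :
    liftGen F c a * liftGen F c b = liftGen F c b * liftGen F c a := by
  have hcomm : ∀ j, evalOpt (I := (F.obj j).I) (liftTuple F c a j) * evalOpt (liftTuple F c b j) =
      evalOpt (I := (F.obj j).I) (liftTuple F c b j) * evalOpt (liftTuple F c a j) := by
    intro j
    rw [liftTuple_eval, liftTuple_eval, ← map_mul, ← map_mul, trc_comm hab]
  unfold liftGen
  by_cases ha : ∃ j, (liftTuple F c a j).isSome
  · by_cases hb : ∃ j, (liftTuple F c b j).isSome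
    · rw [dif_pos ha, dif_pos hb]
      by_cases heq : (⟨liftTuple F c a, ha, fun {_ _} u => liftTuple_compat F c _ u⟩ :
          limE F) = ⟨liftTuple F c b, hb, fun {_ _} u => liftTuple_compat F c _ u⟩
      · rw [heq]
      · exact trc_comm ⟨heq, hcomm⟩
    · rw [dif_neg hb, one_mul, mul_one]
  · rw [dif_neg ha, one_mul, mul_one]

/-- The mediating homomorphism. -/
noncomputable def liftHomC : TraceMonoid c.pt.E c.pt.I →* TraceMonoid (limObj F).E (limObj F).I :=
  liftHom (liftGen F c) (liftGen_comm F c)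

theorem liftHomC_basic : IsBasic (liftHomC F c) := by
  intro d
  rw [liftHomC, liftHom_trc, liftGen]
  by_cases h : ∃ j, (liftTuple F c d j).isSome
  · exact Or.inl ⟨_, dif_pos h⟩
  · exact Or.inr (dif_neg h)

/-- The mediating morphism in FPCM. -/
noncomputable def liftM : c.pt ⟶ limObj F := ⟨liftHomC F c, liftHomC_basic F c⟩

theorem lift_fac (j : J) : liftM F c ≫ proj F j = c.π.app j := by
  apply Subtype.ext
  apply trace_hom_ext
  intro d
  show projHom F j (liftHomC F c (trc d)) = (c.π.app j).1 (trc d)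
  rw [liftHomC, liftHom_trc, liftGen]
  by_cases h : ∃ j, (liftTuple F c d j).isSome
  · rw [dif_pos h, projHom, liftHom_trc]
    exact liftTuple_eval F c d j
  · rw [dif_neg h, map_one]
    push_neg at h
    have hn : liftTuple F c d j = none := Option.not_isSome_iff_eq_none.mp (by simpa using h j)
    have := liftTuple_eval F c d j
    rw [hn] at this
    exact this
end Lift

/-- The limit cone is a limit. -/
noncomputable def limIsLimit : IsLimit (limCone F) where
  lift c := liftM F c
  fac c j := lift_fac F c j
  uniq c m hm := by
    apply Subtype.ext
    apply trace_hom_ext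
    intro d
    show m.1 (trc d) = liftHomC F c (trc d)
    rw [liftHomC, liftHom_trc, liftGen]
    have key : ∀ j, projHom F j (m.1 (trc d)) = (c.π.app j).1 (trc d) := by
      intro j
      have := congrArg (fun h : c.pt ⟶ F.obj j => h.1 (trc d)) (hm j)
      exact this
    rcases m.2 d with ⟨s, hs⟩ | h1
    · have hsj : ∀ j, evalOpt (I := (F.obj j).I) (s.1 j) =
          evalOpt (I := (F.obj j).I) (liftTuple F c d j) := by
        intro j
        rw [liftTuple_eval]
        have := key j
        rw [hs] at this
        exact (liftHom_trc (fun t : limE F => evalOpt (I := (F.obj j).I) (t.1 j)) (fun _ _ hab => hab.2 j) s).symm.trans this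
      have hseq : s.1 = liftTuple F c d := funext fun j => evalOpt_injective (hsj j)
      have hsome : ∃ j, (liftTuple F c d j).isSome := hseq ▸ s.2.1
      rw [dif_pos hsome, hs]
      congr 1
      exact Subtype.ext hseq
    · have hnone : ¬∃ j, (liftTuple F c d j).isSome := by
        rintro ⟨j, hj⟩
        obtain ⟨a, ha⟩ := Option.isSome_iff_exists.mp hj
        have h2 := liftTuple_eval F c d j
        rw [ha] at h2
        have h3 := key j
        rw [h1] at h3
        exact trc_ne_one a (h2.trans (h3.symm.trans (map_one (projHom F j))))
      rw [dif_neg hnone, h1]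
      rfl

end FPCMLimits

/-- The category `FPCM` of trace monoids and basic homomorphisms is complete. -/
theorem fpcm_hasLimits : CategoryTheory.Limits.HasLimits FPCMObj :=
  { has_limits_of_shape := fun _ _ =>
      { has_limit := fun F =>
          CategoryTheory.Limits.HasLimit.mk ⟨FPCMLimits.limCone F, FPCMLimits.limIsLimit F⟩ } }
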